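/- Let B be the incidence matrix of a symmetric 2-(v,k,λ) design and suppose there exists a complex number a of absolute value 1 such that the matrix obtained from B by replacing every 0 entry with a is a complex Hadamard matrix of order v. Then v ≤ 4(k−λ), i.e. the order of the design n = k−λ satisfies v ≤ 4n. -/

import Mathlib

open Matrix

/-- `H` is a complex Hadamard matrix: unimodular entries and `H Hᴴ = n • I`. -/
def IsCHadamard {n : Type*} [Fintype n] [DecidableEq n] (H : Matrix n n ℂ) : Prop :=
  (∀ i j, ‖H i j‖ = 1) ∧
    H * H.conjTranspose = (Fintype.card n : ℂ) • 1

/-- `B` is the incidence matrix (over `ℂ`, with `0`/`1` entries) of a symmetric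
`2-(v,k,λ)` design. -/
def IsIncidence (v k lam : ℕ) (B : Matrix (Fin v) (Fin v) ℂ) : Prop :=
  (∀ i j, B i j = 0 ∨ B i j = 1) ∧
    (∀ i, ∑ j, B i j = (k : ℂ)) ∧ (∀ j, ∑ i, B i j = (k : ℂ)) ∧
    B * B.transpose = ((k : ℂ) - (lam : ℂ)) • 1 + (lam : ℂ) • Matrix.of (fun _ _ => (1 : ℂ))

theorem stmt6 (v k lam : ℕ) (hlk : lam < k) (hkv : k < v)
    (B : Matrix (Fin v) (Fin v) ℂ) (hB : IsIncidence v k lam B)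
    (h : ∃ a : ℂ, ‖a‖ = 1 ∧
        IsCHadamard (Matrix.of fun i j => if B i j = 0 then a else B i j)) :
    v ≤ 4 * (k - lam) := by
  obtain ⟨hB01, hrow, hcol, hBBt⟩ := hB
  obtain ⟨a, ha, hH1, hH2⟩ := h
  have hv2 : 2 ≤ v := by omega
  set i : Fin v := ⟨0, by omega⟩ with hi
  set j : Fin v := ⟨1, by omega⟩ with hj
  have hij : i ≠ j := by simp [hi, hj, Fin.ext_iff]
  have hconj : a * (starRingEnd ℂ) a = 1 := by
    rw [Complex.mul_conj]
    norm_cast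
    rw [Complex.normSq_eq_norm_sq, ha]; norm_num
  have hBstar : ∀ p q : Fin v, (starRingEnd ℂ) (B p q) = B p q := by
    intro p q; rcases hB01 p q with h | h <;> simp [h]
  have hH : ∀ p q : Fin v,
      (Matrix.of fun i j => if B i j = 0 then a else B i j) p q
        = B p q + a * (1 - B p q) := by
    intro p q; rcases hB01 p q with h | h <;> simp [h]
  have hL : ∑ l, B i l * B j l = (lam : ℂ) := by
    have := congrFun (congrFun hBBt i) j
    simpa [Matrix.mul_apply, Matrix.transpose_apply, Matrix.one_apply_ne hij,
      Matrix.add_apply, Matrix.smul_apply, smul_eq_mul] using this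
  have hsum := congrFun (congrFun hH2 i) j
  rw [Matrix.mul_apply] at hsum
  simp only [Matrix.conjTranspose_apply, Matrix.smul_apply, Matrix.one_apply_ne hij,
    smul_zero] at hsum
  have hsum' : ∑ l, (B i l + a * (1 - B i l)) *
      (B j l + (starRingEnd ℂ) a * (1 - B j l)) = 0 := by
    rw [← hsum]
    apply Finset.sum_congr rfl
    intro l _
    rw [hH i l, hH j l]
    simp only [RCLike.star_def, map_add, _root_.map_mul, map_sub, _root_.map_one, hBstar]
  have hexp : ∑ l, (B i l + a * (1 - B i l)) *
      (B j l + (starRingEnd ℂ) a * (1 - B j l)) =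
      (1 - a) * (1 - (starRingEnd ℂ) a) * (∑ l, B i l * B j l)
        + (starRingEnd ℂ) a * (1 - a) * (∑ l, B i l)
        + a * (1 - (starRingEnd ℂ) a) * (∑ l, B j l)
        + (v : ℂ) * (a * (starRingEnd ℂ) a) := by
    rw [Finset.mul_sum, Finset.mul_sum, Finset.mul_sum]
    rw [← Finset.sum_add_distrib, ← Finset.sum_add_distrib]
    have hc : (v : ℂ) * (a * (starRingEnd ℂ) a)
        = ∑ _l : Fin v, a * (starRingEnd ℂ) a := by
      simp [Finset.sum_const, Finset.card_univ, mul_comm]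
    rw [hc, ← Finset.sum_add_distrib]
    apply Finset.sum_congr rfl
    intro l _
    ring
  rw [hexp, hL, hrow i, hrow j, hconj] at hsum'
  have hkey : (v : ℂ) = (2 - (a + (starRingEnd ℂ) a)) * ((k : ℂ) - (lam : ℂ)) := by
    linear_combination hsum' + (2 * (k : ℂ) - (lam : ℂ)) * hconj
  rw [Complex.add_conj] at hkey
  have hre : (v : ℝ) = (2 - 2 * a.re) * ((k : ℝ) - (lam : ℝ)) := by
    exact_mod_cast hkey
  have hre' : |a.re| ≤ 1 := by rw [← ha]; exact Complex.abs_re_le_norm a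
  have hkl : (0 : ℝ) < (k : ℝ) - (lam : ℝ) := by
    have : (lam : ℝ) < (k : ℝ) := by exact_mod_cast hlk
    linarith
  have hfin : (v : ℝ) ≤ 4 * ((k : ℝ) - (lam : ℝ)) := by
    rw [hre]
    have h1 : -1 ≤ a.re := (abs_le.mp hre').1
    nlinarith
  have : (v : ℝ) ≤ ((4 * (k - lam) : ℕ) : ℝ) := by
    push_cast [Nat.cast_sub hlk.le]
    linarith
  exact_mod_cast this
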